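/- Let H be a real Hilbert space, K compact self-adjoint, with 𝓗(x) = ⟨x,Kx⟩ and E(x) = ‖x‖². Suppose for h₁ > 0 and h₂ > 0, x₁ and x₂ are respective global minimisers of E in the helicity classes h₁, h₂, satisfying x_i = λ_i K x_i with λ_i ≠ 0. Then λ₁ = λ₂; that is, the Lagrange multiplier of a global minimiser depends only on the sign of the helicity, not on its value. -/

import Mathlib

open RealInnerProductSpace

private lemma eig_norm_sq {H : Type*} [NormedAddCommGroup H]
    [InnerProductSpace ℝ H] (K : H →L[ℝ] H) (x : H) (l : ℝ)
    (he : x = l • K x) : ‖x‖ ^ 2 = l * ⟪x, K x⟫ := by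
  calc ‖x‖ ^ 2 = ⟪x, x⟫ := (real_inner_self_eq_norm_sq x).symm
    _ = ⟪x, l • K x⟫ := by rw [← he]
    _ = l * ⟪x, K x⟫ := real_inner_smul_right x (K x) l

private lemma le_aux {H : Type*} [NormedAddCommGroup H]
    [InnerProductSpace ℝ H] (K : H →L[ℝ] H) (h₁ h₂ : ℝ) (hh₁ : 0 < h₁) (hh₂ : 0 < h₂)
    (x₁ x₂ : H) (l₁ l₂ : ℝ)
    (hx₁ : ⟪x₁, K x₁⟫ = h₁) (he₁ : x₁ = l₁ • K x₁)
    (hmin₂ : ∀ y : H, ⟪y, K y⟫ = h₂ → ‖x₂‖ ^ 2 ≤ ‖y‖ ^ 2)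
    (hx₂ : ⟪x₂, K x₂⟫ = h₂)
    (he₂ : x₂ = l₂ • K x₂) : l₂ ≤ l₁ := by
  set μ : ℝ := Real.sqrt (h₂ / h₁) with hμ
  have hμsq : μ ^ 2 = h₂ / h₁ := Real.sq_sqrt (by positivity)
  have hy : ⟪μ • x₁, K (μ • x₁)⟫ = h₂ := by
    rw [map_smul, real_inner_smul_left, real_inner_smul_right, hx₁, ← mul_assoc,
      ← sq, hμsq]
    field_simp
  have hle := hmin₂ (μ • x₁) hy
  rw [norm_smul, mul_pow, eig_norm_sq K x₁ l₁ he₁, hx₁, Real.norm_eq_abs, sq_abs,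
    hμsq] at hle
  rw [eig_norm_sq K x₂ l₂ he₂, hx₂] at hle
  have hle' : l₂ * h₂ ≤ l₁ * h₂ :=
    hle.trans_eq (by field_simp)
  exact le_of_mul_le_mul_right hle' hh₂

theorem multiplier_depends_only_on_sign {H : Type*} [NormedAddCommGroup H]
    [InnerProductSpace ℝ H] [CompleteSpace H] (K : H →L[ℝ] H) (hK : IsSelfAdjoint K)
    (hKc : IsCompactOperator K) (h₁ h₂ : ℝ) (hh₁ : 0 < h₁) (hh₂ : 0 < h₂)
    (x₁ x₂ : H) (l₁ l₂ : ℝ) (hl₁ : l₁ ≠ 0) (hl₂ : l₂ ≠ 0)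
    (hx₁ : ⟪x₁, K x₁⟫ = h₁) (hmin₁ : ∀ y : H, ⟪y, K y⟫ = h₁ → ‖x₁‖ ^ 2 ≤ ‖y‖ ^ 2)
    (he₁ : x₁ = l₁ • K x₁)
    (hx₂ : ⟪x₂, K x₂⟫ = h₂) (hmin₂ : ∀ y : H, ⟪y, K y⟫ = h₂ → ‖x₂‖ ^ 2 ≤ ‖y‖ ^ 2)
    (he₂ : x₂ = l₂ • K x₂) :
    l₁ = l₂ :=
  le_antisymm (le_aux K h₂ h₁ hh₂ hh₁ x₂ x₁ l₂ l₁ hx₂ he₂ hmin₁ hx₁ he₁)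
    (le_aux K h₁ h₂ hh₁ hh₂ x₁ x₂ l₁ l₂ hx₁ he₁ hmin₂ hx₂ he₂)
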